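/- Let B = [0,N1] × [0,N2] with N1, N2 > 0, let ℓ > 0, let Z ⊆ B be a zone, and let Q be a packing with every rectangle of Q contained in Z and of width at least 2ℓ. Let G be the conflict graph of Q and let C ⊆ Q be an st-separator in G. Then the rectangles of Q ∖ C (i.e., their width–height pairs) can be packed inside the negatively shifted zone ←Z⟨ℓ⟩ = (⋃_{(x,y)∈Z} [x−ℓ, x] × {y}) ∩ ([0, N1−ℓ] × [0, N2]). -/

import Mathlib

/-- A placed axis-parallel rectangle `[x, x+w] × [y, y+h]`. -/
structure PRect where
  x : ℝ
  y : ℝ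
  w : ℝ
  h : ℝ

namespace PRect

/-- The rectangle as a subset of the plane. -/
def toSet (R : PRect) : Set (ℝ × ℝ) :=
  Set.Icc R.x (R.x + R.w) ×ˢ Set.Icc R.y (R.y + R.h)

/-- The (open) interior of a placed rectangle. -/
def inter (R : PRect) : Set (ℝ × ℝ) :=
  Set.Ioo R.x (R.x + R.w) ×ˢ Set.Ioo R.y (R.y + R.h)

/-- Two placed rectangles overlap if their interiors intersect. -/
def Overlap (R R' : PRect) : Prop := (R.inter ∩ R'.inter).Nonempty

/-- The rectangle has positive width and height. -/
def Proper (R : PRect) : Prop := 0 < R.w ∧ 0 < R.h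

/-- The left side `{x} × [y, y+h]`. -/
def leftSide (R : PRect) : Set (ℝ × ℝ) := {R.x} ×ˢ Set.Icc R.y (R.y + R.h)

/-- The right side `{x+w} × [y, y+h]`. -/
def rightSide (R : PRect) : Set (ℝ × ℝ) := {R.x + R.w} ×ˢ Set.Icc R.y (R.y + R.h)

/-- The bottom side `[x, x+w] × {y}`. -/
def bottomSide (R : PRect) : Set (ℝ × ℝ) := Set.Icc R.x (R.x + R.w) ×ˢ {R.y}

/-- The top side `[x, x+w] × {y+h}`. -/
def topSide (R : PRect) : Set (ℝ × ℝ) := Set.Icc R.x (R.x + R.w) ×ˢ {R.y + R.h}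

end PRect

/-- The box `[0, N1] × [0, N2]`. -/
def box (N1 N2 : ℝ) : Set (ℝ × ℝ) := Set.Icc 0 N1 ×ˢ Set.Icc 0 N2

/-- The placed rectangle `[-1, 0] × [0, N2]` associated with the left side of the box. -/
def Rleft (N2 : ℝ) : PRect := ⟨-1, 0, 1, N2⟩

/-- The placed rectangle `[N1, N1+1] × [0, N2]` associated with the right side of the box. -/
def Rright (N1 N2 : ℝ) : PRect := ⟨N1, 0, 1, N2⟩

/-- `R` sees `R'` from the left: `x(R) + w(R) ≤ x(R')` and there is a height `yy`,
strictly inside the vertical extents of both `R` and `R'`, such that the horizontal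
segment `[x(R)+w(R), x(R')] × {yy}` is disjoint from every rectangle of the
packing `Q` other than `R` and `R'`. -/
def SeesDir (Q : Set PRect) (R R' : PRect) : Prop :=
  R.x + R.w ≤ R'.x ∧ ∃ yy : ℝ,
    R.y < yy ∧ yy < R.y + R.h ∧ R'.y < yy ∧ yy < R'.y + R'.h ∧
    ∀ T ∈ Q, T ≠ R → T ≠ R' →
      ∀ xx : ℝ, R.x + R.w ≤ xx → xx ≤ R'.x → (xx, yy) ∉ T.toSet

/-- Two distinct placed rectangles see each other (in the packing `Q`). -/
def Sees (Q : Set PRect) (R R' : PRect) : Prop :=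
  R ≠ R' ∧ (SeesDir Q R R' ∨ SeesDir Q R' R)

/-- Adjacency in the conflict graph of the packing `Q` inside `[0,N1] × [0,N2]`:
the vertices are the rectangles of `Q` together with `Rleft N2` (the vertex `s`) and
`Rright N1 N2` (the vertex `t`); two vertices are adjacent iff they see each other,
except that the left and right sides are not adjacent to each other. -/
def ConflictAdj (N1 N2 : ℝ) (Q : Set PRect) (u v : PRect) : Prop :=
  u ∈ Q ∪ {Rleft N2, Rright N1 N2} ∧ v ∈ Q ∪ {Rleft N2, Rright N1 N2} ∧
  ¬ (u ∈ ({Rleft N2, Rright N1 N2} : Set PRect) ∧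
     v ∈ ({Rleft N2, Rright N1 N2} : Set PRect)) ∧
  Sees Q u v

/-- The center of a placed rectangle. In particular the center of `Rleft N2` is
`(-1/2, N2/2)` and the center of `Rright N1 N2` is `(N1 + 1/2, N2/2)`. -/
noncomputable def PRect.center (R : PRect) : ℝ × ℝ := (R.x + R.w / 2, R.y + R.h / 2)

/-- `C` is an `st`-separator in the conflict graph of `Q`: `C ⊆ Q` and every path from
`s = Rleft N2` to `t = Rright N1 N2` in the conflict graph contains a vertex of `C`. -/
def IsSTSeparator (N1 N2 : ℝ) (Q : Set PRect) (C : Set PRect) : Prop :=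
  C ⊆ Q ∧
  ∀ (n : ℕ) (v : Fin (n + 1) → PRect),
    Function.Injective v →
    v 0 = Rleft N2 → v (Fin.last n) = Rright N1 N2 →
    (∀ i : Fin n, ConflictAdj N1 N2 Q (v i.castSucc) (v i.succ)) →
    ∃ i, v i ∈ C

/-- The negatively shifted zone `←Z⟨ℓ⟩ = (⋃_{(x,y)∈Z} [x−ℓ,x] × {y}) ∩ ([0,N1−ℓ] × [0,N2])`. -/
def shiftNeg (Z : Set (ℝ × ℝ)) (ℓ N1 N2 : ℝ) : Set (ℝ × ℝ) :=
  {p | ∃ x : ℝ, (x, p.2) ∈ Z ∧ x - ℓ ≤ p.1 ∧ p.1 ≤ x} ∩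
    (Set.Icc 0 (N1 - ℓ) ×ˢ Set.Icc 0 N2)

/-- The positively shifted zone `→Z⟨ℓ⟩ = (⋃_{(x,y)∈Z} [x,x+ℓ] × {y}) ∩ ([0,N1] × [0,N2])`. -/
def shiftPos (Z : Set (ℝ × ℝ)) (ℓ N1 N2 : ℝ) : Set (ℝ × ℝ) :=
  {p | ∃ x : ℝ, (x, p.2) ∈ Z ∧ x ≤ p.1 ∧ p.1 ≤ x + ℓ} ∩
    (Set.Icc 0 N1 ×ˢ Set.Icc 0 N2)

/-- The rounded zone `↔Z⟨ℓ⟩ = (⋃_{(x,y)∈Z} [x−ℓ,x+ℓ] × {y}) ∩ ([0,N1] × [0,N2])`. -/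
def shiftBoth (Z : Set (ℝ × ℝ)) (ℓ N1 N2 : ℝ) : Set (ℝ × ℝ) :=
  {p | ∃ x : ℝ, (x, p.2) ∈ Z ∧ x - ℓ ≤ p.1 ∧ p.1 ≤ x + ℓ} ∩
    (Set.Icc 0 N1 ×ˢ Set.Icc 0 N2)

/-- The family of rectangles indexed by `F`, where the member indexed by `R ∈ F` has
width `dw R` and height `dh R`, can be packed inside the zone `Z`: there is an
assignment of pairwise non-overlapping placed rectangles of these dimensions, each
contained in `Z`. -/
def CanPackDims (F : Set PRect) (dw dh : PRect → ℝ) (Z : Set (ℝ × ℝ)) : Prop :=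
  ∃ f : PRect → PRect,
    (∀ R ∈ F, (f R).w = dw R ∧ (f R).h = dh R ∧ (f R).toSet ⊆ Z) ∧
    ∀ R ∈ F, ∀ R' ∈ F, R ≠ R' → ¬ (f R).Overlap (f R')

section Aux

open SimpleGraph

/-- `getVert` is injective on a path. -/
lemma path_getVert_inj {V : Type*} {G : SimpleGraph V} {u v : V} (p : G.Walk u v) :
    p.IsPath → ∀ i j : ℕ, i ≤ p.length → j ≤ p.length →
      p.getVert i = p.getVert j → i = j := by
  induction p with
  | nil => intro _ i j hi hj _; simp at hi hj; omega
  | @cons a b c h q ih =>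
    intro hp i j hi hj heq
    rw [SimpleGraph.Walk.cons_isPath_iff] at hp
    simp only [SimpleGraph.Walk.length_cons] at hi hj
    match i, j with
    | 0, 0 => rfl
    | 0, (j' + 1) =>
      exfalso
      apply hp.2
      rw [SimpleGraph.Walk.mem_support_iff_exists_getVert]
      refine ⟨j', ?_, by omega⟩
      have h0 : (SimpleGraph.Walk.cons h q).getVert 0 = a := SimpleGraph.Walk.getVert_zero _
      rw [SimpleGraph.Walk.getVert_cons_succ] at heq
      rw [← heq, h0]
    | (i' + 1), 0 =>
      exfalso
      apply hp.2
      rw [SimpleGraph.Walk.mem_support_iff_exists_getVert]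
      refine ⟨i', ?_, by omega⟩
      have h0 : (SimpleGraph.Walk.cons h q).getVert 0 = a := SimpleGraph.Walk.getVert_zero _
      rw [SimpleGraph.Walk.getVert_cons_succ] at heq
      rw [heq, h0]
    | (i' + 1), (j' + 1) =>
      simp only [SimpleGraph.Walk.getVert_cons_succ] at heq
      have := ih hp.1 i' j' (by omega) (by omega) heq
      omega

lemma overlap_comm {R R' : PRect} : R.Overlap R' ↔ R'.Overlap R := by
  unfold PRect.Overlap
  rw [Set.inter_comm]

/-- If two proper rectangles do not overlap but their open vertical ranges share a
height, then their open horizontal ranges are disjoint. -/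
lemma disjointX {R T : PRect} (hRw : 0 < R.w) (hTw : 0 < T.w)
    (h : ¬ R.Overlap T) {yy : ℝ} (hy1 : R.y < yy) (hy2 : yy < R.y + R.h)
    (hy3 : T.y < yy) (hy4 : yy < T.y + T.h) :
    T.x + T.w ≤ R.x ∨ R.x + R.w ≤ T.x := by
  by_contra hc
  push_neg at hc
  obtain ⟨h1, h2⟩ := hc
  apply h
  have hm : max R.x T.x < min (R.x + R.w) (T.x + T.w) := by
    apply max_lt <;> apply lt_min <;> linarith
  refine ⟨((max R.x T.x + min (R.x + R.w) (T.x + T.w)) / 2, yy), ?_, ?_⟩ <;>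
    simp only [PRect.inter, Set.mem_prod, Set.mem_Ioo] <;>
    refine ⟨⟨?_, ?_⟩, ?_, ?_⟩ <;>
    first
      | linarith [le_max_left R.x T.x, le_max_right R.x T.x,
          min_le_left (R.x + R.w) (T.x + T.w), min_le_right (R.x + R.w) (T.x + T.w)]

/-- Core seeing lemma: if every rectangle whose open vertical range meets `(lo, hi)`
misses the horizontal strip, then a generic height witnesses `SeesDir`. -/
lemma seesDir_of (Q : Set PRect) (hfin : Q.Finite) (R R' : PRect)
    (hab : R.x + R.w ≤ R'.x) (lo hi : ℝ)
    (hlo1 : R.y ≤ lo) (hlo2 : R'.y ≤ lo)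
    (hhi1 : hi ≤ R.y + R.h) (hhi2 : hi ≤ R'.y + R'.h) (hlohi : lo < hi)
    (hblock : ∀ T ∈ Q, T ≠ R → T ≠ R' → ∀ yy : ℝ, lo < yy → yy < hi →
        T.y < yy → yy < T.y + T.h → ∀ xx : ℝ, R.x + R.w ≤ xx → xx ≤ R'.x →
        T.x ≤ xx → xx ≤ T.x + T.w → False) :
    SeesDir Q R R' := by
  classical
  have hE : (⋃ T ∈ Q, ({T.y, T.y + T.h} : Set ℝ)).Finite :=
    hfin.biUnion (fun T _ => (Set.finite_singleton _).insert _)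
  have hIoo : (Set.Ioo lo hi).Infinite := Set.Ioo_infinite hlohi
  obtain ⟨yy, hyyI, hyyE⟩ := (hIoo.diff hE).nonempty
  refine ⟨hab, yy, by linarith [hyyI.1], by linarith [hyyI.2],
    by linarith [hyyI.1], by linarith [hyyI.2], ?_⟩
  intro T hT hTR hTR' xx hx1 hx2 hmem
  simp only [PRect.toSet, Set.mem_prod, Set.mem_Icc] at hmem
  have hyT1 : T.y < yy := by
    rcases lt_or_eq_of_le hmem.2.1 with h | h
    · exact h
    · exact absurd (Set.mem_biUnion hT (by simp [← h])) hyyE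
  have hyT2 : yy < T.y + T.h := by
    rcases lt_or_eq_of_le hmem.2.2 with h | h
    · exact h
    · exact absurd (Set.mem_biUnion hT (by simp [h])) hyyE
  exact hblock T hT hTR hTR' yy hyyI.1 hyyI.2 hyT1 hyT2 xx hx1 hx2 hmem.1.1 hmem.1.2

end Aux


/-- If `Q` is a packing inside a zone `Z ⊆ B` with all widths at least `2ℓ` and `C` is
an `st`-separator in the conflict graph of `Q`, then the rectangles of `Q \ C` (their
width–height pairs) can be packed inside the negatively shifted zone `←Z⟨ℓ⟩`. -/
theorem pack_in_shiftNeg (N1 N2 ℓ : ℝ) (hN1 : 0 < N1) (hN2 : 0 < N2) (hℓ : 0 < ℓ)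
    (Z : Set (ℝ × ℝ)) (hZ : Z ⊆ box N1 N2)
    (Q : Set PRect) (hfin : Q.Finite)
    (hproper : ∀ R ∈ Q, R.Proper)
    (hpack : ∀ R ∈ Q, ∀ R' ∈ Q, R ≠ R' → ¬ R.Overlap R')
    (hin : ∀ R ∈ Q, R.toSet ⊆ Z)
    (hwidth : ∀ R ∈ Q, 2 * ℓ ≤ R.w)
    (C : Set PRect) (hsep : IsSTSeparator N1 N2 Q C) :
    CanPackDims (Q \ C) (fun R => R.w) (fun R => R.h) (shiftNeg Z ℓ N1 N2) := by
  classical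
  -- bounds on rectangles of Q
  have hbox : ∀ R ∈ Q, 0 ≤ R.x ∧ R.x + R.w ≤ N1 ∧ 0 ≤ R.y ∧ R.y + R.h ≤ N2 := by
    intro R hR
    have hw := (hproper R hR).1
    have hh := (hproper R hR).2
    have h1 : (R.x, R.y) ∈ R.toSet := by
      simp only [PRect.toSet, Set.mem_prod, Set.mem_Icc]
      constructor <;> constructor <;> linarith
    have h2 : (R.x + R.w, R.y + R.h) ∈ R.toSet := by
      simp only [PRect.toSet, Set.mem_prod, Set.mem_Icc]
      constructor <;> constructor <;> linarith
    have hb1 := hZ (hin R hR h1)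
    have hb2 := hZ (hin R hR h2)
    simp only [box, Set.mem_prod, Set.mem_Icc] at hb1 hb2
    exact ⟨hb1.1.1, hb2.1.2, hb1.2.1, hb2.2.2⟩
  have hsQ : Rleft N2 ∉ Q := by
    intro h
    have := (hbox _ h).1
    simp only [Rleft] at this
    linarith
  have htQ : Rright N1 N2 ∉ Q := by
    intro h
    have := (hbox _ h).2.1
    simp only [Rright] at this
    linarith
  have hnotst : ∀ R ∈ Q, R ∉ ({Rleft N2, Rright N1 N2} : Set PRect) := by
    intro R hR h
    rcases h with h | h
    · exact hsQ (h ▸ hR)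
    · exact htQ (h ▸ hR)
  -- the conflict graph
  set G : SimpleGraph PRect :=
    { Adj := fun u v => ConflictAdj N1 N2 Q u v
      symm := ⟨by
        rintro u v ⟨h1, h2, h3, h4, h5⟩
        exact ⟨h2, h1, fun hc => h3 ⟨hc.2, hc.1⟩, h4.symm, h5.symm⟩⟩
      loopless := ⟨fun u h => h.2.2.2.1 rfl⟩ } with hG
  -- the set of rectangles reachable from s avoiding C
  set A : Set PRect :=
    {R : PRect | Relation.ReflTransGen
      (fun u v => ConflictAdj N1 N2 Q u v ∧ v ∈ Q ∧ v ∉ C) (Rleft N2) R} with hA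
  have hAstep : ∀ R R', R ∈ A → ConflictAdj N1 N2 Q R R' → R' ∈ Q → R' ∉ C → R' ∈ A :=
    fun R R' hRA hadj hQ hC => Relation.ReflTransGen.tail hRA ⟨hadj, hQ, hC⟩
  -- from reachability, a walk avoiding C
  have hwalk : ∀ R, R ∈ A →
      ∃ w : G.Walk (Rleft N2) R, ∀ x ∈ w.support, x = Rleft N2 ∨ (x ∈ Q ∧ x ∉ C) := by
    intro R hR
    induction hR with
    | refl => exact ⟨SimpleGraph.Walk.nil, by simp⟩
    | @tail b c _ hbc ih =>
      obtain ⟨w, hw⟩ := ih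
      refine ⟨w.concat hbc.1, ?_⟩
      intro x hx
      rw [SimpleGraph.Walk.support_concat, List.mem_append] at hx
      rcases hx with hx | hx
      · exact hw x hx
      · simp only [List.mem_singleton] at hx
        exact Or.inr (hx ▸ ⟨hbc.2.1, hbc.2.2⟩)
  -- no rectangle of A is adjacent to t
  have hnot : ∀ R, R ∈ A → ConflictAdj N1 N2 Q R (Rright N1 N2) → False := by
    intro R hRA hadj
    obtain ⟨w, hw⟩ := hwalk R hRA
    have hadj' : G.Adj R (Rright N1 N2) := hadj
    set w' : G.Walk (Rleft N2) (Rright N1 N2) := w.concat hadj' with hw'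
    set p := w'.bypass with hp'
    have hp : p.IsPath := SimpleGraph.Walk.bypass_isPath w'
    have hinj : Function.Injective (fun i : Fin (p.length + 1) => p.getVert i.val) := by
      intro i j hij
      exact Fin.ext (path_getVert_inj p hp i.val j.val (Nat.lt_succ_iff.mp i.isLt)
        (Nat.lt_succ_iff.mp j.isLt) hij)
    obtain ⟨i, hiC⟩ := hsep.2 p.length (fun i : Fin (p.length + 1) => p.getVert i.val)
      hinj (by simp) (by simp [SimpleGraph.Walk.getVert_length])
      (by
        intro i
        have := p.adj_getVert_succ i.isLt
        simpa using this)
    -- the vertex is in the support of the bypass, hence of w'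
    have hmem : p.getVert i.val ∈ p.support :=
      SimpleGraph.Walk.mem_support_iff_exists_getVert.mpr
        ⟨i.val, rfl, Nat.lt_succ_iff.mp i.isLt⟩
    have hmem' : p.getVert i.val ∈ w'.support := SimpleGraph.Walk.support_bypass_subset w' hmem
    rw [hw', SimpleGraph.Walk.support_concat, List.mem_append] at hmem'
    rcases hmem' with hx | hx
    · rcases hw _ hx with hx | hx
      · exact hsQ (hsep.1 (hx ▸ hiC))
      · exact hx.2 hiC
    · simp only [List.mem_singleton] at hx
      exact htQ (hsep.1 (hx ▸ hiC))
  -- rectangles close to the left side are in A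
  have hAleft : ∀ R ∈ Q, R ∉ C → R.x < ℓ → R ∈ A := by
    intro R hR hRC hRx
    obtain ⟨hx0, hxN, hy0, hyN⟩ := hbox R hR
    have hsee : SeesDir Q (Rleft N2) R := by
      apply seesDir_of Q hfin (Rleft N2) R (by simp only [Rleft]; linarith)
        R.y (R.y + R.h) (by simp only [Rleft]; linarith) le_rfl
        (by simp only [Rleft]; linarith) le_rfl (by linarith [(hproper R hR).2])
      intro T hT _ hTR yy hyy1 hyy2 hyT1 hyT2 xx hx1 hx2 hTx1 hTx2
      simp only [Rleft] at hx1 hx2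
      obtain ⟨hT0, hTN, _, _⟩ := hbox T hT
      have hd := disjointX (hproper R hR).1 (hproper T hT).1
        (hpack R hR T hT (fun h => hTR h.symm)) hyy1 hyy2 hyT1 hyT2
      have hTw := hwidth T hT
      rcases hd with h | h
      · linarith
      · linarith [(hproper R hR).1]
    have hadj : ConflictAdj N1 N2 Q (Rleft N2) R := by
      refine ⟨Or.inr (by simp), Or.inl hR, fun hc => hnotst R hR hc.2, ?_, Or.inl hsee⟩
      exact fun h => hsQ (h ▸ hR)
    exact Relation.ReflTransGen.single ⟨hadj, hR, hRC⟩
  -- rectangles of A stay away from the right side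
  have hAright : ∀ R ∈ Q, R ∈ A → R.x + R.w ≤ N1 - ℓ := by
    intro R hR hRA
    by_contra hc
    push_neg at hc
    obtain ⟨hx0, hxN, hy0, hyN⟩ := hbox R hR
    have hsee : SeesDir Q R (Rright N1 N2) := by
      apply seesDir_of Q hfin R (Rright N1 N2) (by simp only [Rright]; linarith)
        R.y (R.y + R.h) le_rfl (by simp only [Rright]; linarith)
        le_rfl (by simp only [Rright]; linarith) (by linarith [(hproper R hR).2])
      intro T hT hTR _ yy hyy1 hyy2 hyT1 hyT2 xx hx1 hx2 hTx1 hTx2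
      simp only [Rright] at hx1 hx2
      obtain ⟨hT0, hTN, _, _⟩ := hbox T hT
      have hd := disjointX (hproper R hR).1 (hproper T hT).1
        (hpack R hR T hT (fun h => hTR h.symm)) hyy1 hyy2 hyT1 hyT2
      have hTw := hwidth T hT
      rcases hd with h | h
      · linarith [(hproper R hR).1]
      · linarith
    exact hnot R hRA
      ⟨Or.inl hR, Or.inr (by simp), fun hc' => hnotst R hR hc'.1,
        fun h => htQ (h ▸ hR), Or.inl hsee⟩
  -- mixed non-overlap
  have hmix : ∀ R ∈ Q, ∀ R' ∈ Q, R ∈ A → R' ∉ C → R' ∉ A →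
      ¬ R.Overlap ⟨R'.x - ℓ, R'.y, R'.w, R'.h⟩ := by
    intro R hR R' hR' hRA hR'C hR'A hov
    obtain ⟨p, hp1, hp2⟩ := hov
    simp only [PRect.inter, Set.mem_prod, Set.mem_Ioo] at hp1 hp2
    have hne : R ≠ R' := fun h => hR'A (h ▸ hRA)
    have hd := disjointX (hproper R hR).1 (hproper R' hR').1
      (hpack R hR R' hR' hne) hp1.2.1 hp1.2.2 hp2.2.1 hp2.2.2
    rcases hd with h | h
    · linarith [hp1.1.1, hp2.1.2]
    · have hgap : R'.x < R.x + R.w + ℓ := by linarith [hp1.1.2, hp2.1.1]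
      have hsee : SeesDir Q R R' := by
        apply seesDir_of Q hfin R R' h (max R.y R'.y) (min (R.y + R.h) (R'.y + R'.h))
          (le_max_left _ _) (le_max_right _ _) (min_le_left _ _) (min_le_right _ _)
          (lt_trans (max_lt hp1.2.1 hp2.2.1) (lt_min hp1.2.2 hp2.2.2))
        intro T hT hTR hTR' yy hyy1 hyy2 hyT1 hyT2 xx hx1 hx2 hTx1 hTx2
        have hyR1 : R.y < yy := lt_of_le_of_lt (le_max_left _ _) hyy1
        have hyR2 : yy < R.y + R.h := lt_of_lt_of_le hyy2 (min_le_left _ _)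
        have hyR'1 : R'.y < yy := lt_of_le_of_lt (le_max_right _ _) hyy1
        have hyR'2 : yy < R'.y + R'.h := lt_of_lt_of_le hyy2 (min_le_right _ _)
        have hd1 := disjointX (hproper R hR).1 (hproper T hT).1
          (hpack R hR T hT (fun hh => hTR hh.symm)) hyR1 hyR2 hyT1 hyT2
        have hd2 := disjointX (hproper R' hR').1 (hproper T hT).1
          (hpack R' hR' T hT (fun hh => hTR' hh.symm)) hyR'1 hyR'2 hyT1 hyT2
        have hTw := hwidth T hT
        rcases hd1 with h1 | h1
        · linarith [(hproper R hR).1]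
        · rcases hd2 with h2 | h2
          · linarith
          · linarith [(hproper R' hR').1]
      have hadj : ConflictAdj N1 N2 Q R R' :=
        ⟨Or.inl hR, Or.inl hR', fun hc => hnotst R hR hc.1, hne, Or.inl hsee⟩
      exact hR'A (hAstep R R' hRA hadj hR' hR'C)
  -- the packing map
  refine ⟨fun R => if R ∈ A then R else ⟨R.x - ℓ, R.y, R.w, R.h⟩, ?_, ?_⟩
  · intro R hR
    obtain ⟨hRQ, hRC⟩ := hR
    obtain ⟨hx0, hxN, hy0, hyN⟩ := hbox R hRQ
    by_cases hA' : R ∈ A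
    · simp only [if_pos hA']
      refine ⟨trivial, trivial, ?_⟩
      intro p hp
      have hpZ : p ∈ Z := hin R hRQ hp
      simp only [PRect.toSet, Set.mem_prod, Set.mem_Icc] at hp
      have hright := hAright R hRQ hA'
      refine ⟨⟨p.1, ?_, by linarith, le_rfl⟩, ⟨by linarith [hp.1.1], by linarith [hp.1.2]⟩,
        by linarith [hp.2.1], by linarith [hp.2.2]⟩
      · rwa [Prod.mk.eta]
    · simp only [if_neg hA']
      have hxℓ : ℓ ≤ R.x := by
        by_contra hcc
        push_neg at hcc
        exact hA' (hAleft R hRQ hRC hcc)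
      refine ⟨trivial, trivial, ?_⟩
      intro p hp
      simp only [PRect.toSet, Set.mem_prod, Set.mem_Icc] at hp
      refine ⟨⟨p.1 + ℓ, ?_, by linarith, by linarith⟩,
        ⟨by linarith [hp.1.1], by linarith [hp.1.2]⟩,
        by linarith [hp.2.1], by linarith [hp.2.2]⟩
      · have : (p.1 + ℓ, p.2) ∈ R.toSet := by
          simp only [PRect.toSet, Set.mem_prod, Set.mem_Icc]
          exact ⟨⟨by linarith [hp.1.1], by linarith [hp.1.2]⟩, hp.2⟩
        exact hin R hRQ this
  · intro R hR R' hR' hne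
    obtain ⟨hRQ, hRC⟩ := hR
    obtain ⟨hR'Q, hR'C⟩ := hR'
    by_cases hA1 : R ∈ A <;> by_cases hA2 : R' ∈ A
    · simp only [if_pos hA1, if_pos hA2]
      exact hpack R hRQ R' hR'Q hne
    · simp only [if_pos hA1, if_neg hA2]
      exact hmix R hRQ R' hR'Q hA1 hR'C hA2
    · simp only [if_neg hA1, if_pos hA2]
      intro hov
      exact hmix R' hR'Q R hRQ hA2 hRC hA1 (overlap_comm.mp hov)
    · simp only [if_neg hA1, if_neg hA2]
      intro hov
      apply hpack R hRQ R' hR'Q hne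
      obtain ⟨p, h1, h2⟩ := hov
      simp only [PRect.inter, Set.mem_prod, Set.mem_Ioo] at h1 h2
      refine ⟨(p.1 + ℓ, p.2), ?_, ?_⟩ <;>
        simp only [PRect.inter, Set.mem_prod, Set.mem_Ioo] <;>
        refine ⟨⟨?_, ?_⟩, ?_, ?_⟩ <;>
        first
          | linarith [h1.1.1, h1.1.2, h1.2.1, h1.2.2, h2.1.1, h2.1.2, h2.2.1, h2.2.2]
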